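/- Let G be a finite simple graph with vertex set V = {x_1,…,x_n}, and let G' = G ∪ W(V) be the whisker graph obtained from G by adding n new vertices y_1,…,y_n and the new edges {x_i, y_i} for i = 1,…,n. Then the independence complex Δ_{G'} is pure shellable. -/

import Mathlib

variable {V : Type} [Fintype V] [DecidableEq V]

/-- A clutter: a family of finsets (edges), none of which contains another. -/
def IsClutter (E : Set (Finset V)) : Prop :=
  ∀ e ∈ E, ∀ f ∈ E, e ⊆ f → e = f

/-- A vertex cover: a set of vertices meeting every edge. -/
def IsVertexCover (E : Set (Finset V)) (C : Finset V) : Prop :=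
  ∀ e ∈ E, (e ∩ C).Nonempty

/-- A minimal vertex cover. -/
def IsMinimalVertexCover (E : Set (Finset V)) (C : Finset V) : Prop :=
  IsVertexCover E C ∧ ∀ D ⊂ C, ¬ IsVertexCover E D

/-- The covering number: minimum cardinality of a vertex cover. -/
noncomputable def coveringNumber (E : Set (Finset V)) : ℕ :=
  sInf {n : ℕ | ∃ C : Finset V, IsVertexCover E C ∧ C.card = n}

/-- Unmixed: all minimal vertex covers have the same cardinality. -/
def Unmixed (E : Set (Finset V)) : Prop :=
  ∀ C D : Finset V, IsMinimalVertexCover E C → IsMinimalVertexCover E D →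
    C.card = D.card

/-- A matching: a set of pairwise disjoint edges. -/
def IsMatching (E : Set (Finset V)) (M : Finset (Finset V)) : Prop :=
  ↑M ⊆ E ∧ (M : Set (Finset V)).Pairwise Disjoint

/-- The König property: the maximum size of a matching equals the covering number. -/
def HasKonigProperty (E : Set (Finset V)) : Prop :=
  (∃ M : Finset (Finset V), IsMatching E M ∧ M.card = coveringNumber E) ∧
  ∀ M : Finset (Finset V), IsMatching E M → M.card ≤ coveringNumber E

/-- A perfect matching of König type: pairwise disjoint edges `em 0, …, em (g-1)`
whose union is the whole vertex set, where `g` is the covering number. -/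
def IsPerfectMatchingKT (E : Set (Finset V)) {g : ℕ} (em : Fin g → Finset V) : Prop :=
  (∀ i, em i ∈ E) ∧ (∀ i j, i ≠ j → Disjoint (em i) (em j)) ∧
  (∀ x : V, ∃ i, x ∈ em i) ∧ g = coveringNumber E

/-- An independent set: contains no edge. -/
def IsIndependentSet (E : Set (Finset V)) (F : Finset V) : Prop :=
  ∀ e ∈ E, ¬ e ⊆ F

/-- A facet of the independence complex: a maximal independent set. -/
def IsFacet (E : Set (Finset V)) (F : Finset V) : Prop :=
  IsIndependentSet E F ∧ ∀ G : Finset V, IsIndependentSet E G → F ⊆ G → F = G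

/-- The set of facets of the independence complex of a clutter. -/
def cFacets (E : Set (Finset V)) : Set (Finset V) := {F | IsFacet E F}

/-- `F : Fin s → Finset V` is a shelling order of the family of facets `Fac`. -/
def IsShelling {s : ℕ} (Fac : Set (Finset V)) (F : Fin s → Finset V) : Prop :=
  Function.Injective F ∧ (∀ G : Finset V, G ∈ Fac ↔ ∃ i, F i = G) ∧
  ∀ i j : Fin s, i < j →
    ∃ v ∈ F j \ F i, ∃ l : Fin s, l < j ∧ F j \ F l = {v}

/-- A family of facets is shellable if it admits a shelling order. -/
def Shellable (Fac : Set (Finset V)) : Prop :=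
  ∃ (s : ℕ) (F : Fin s → Finset V), IsShelling Fac F

/-- A family of facets is pure if all its members have the same cardinality. -/
def PureFamily (Fac : Set (Finset V)) : Prop :=
  ∀ F ∈ Fac, ∀ G ∈ Fac, F.card = G.card

/-- Pure shellable: pure and shellable. -/
def PureShellable (Fac : Set (Finset V)) : Prop :=
  PureFamily Fac ∧ Shellable Fac

/-- A free vertex: a vertex belonging to exactly one edge. -/
def HasFreeVertex (E : Set (Finset V)) : Prop :=
  ∃ x : V, ∃ e ∈ E, x ∈ e ∧ ∀ f ∈ E, x ∈ f → f = e

/-- A cycle of length `r`: `r` distinct vertices and `r` distinct edges such that each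
of the vertices lies in exactly two of the edges and each of the edges contains exactly
two of the vertices. -/
def HasCycleOfLength (E : Set (Finset V)) (r : ℕ) : Prop :=
  ∃ (v : Fin r → V) (f : Fin r → Finset V),
    Function.Injective v ∧ Function.Injective f ∧ (∀ j, f j ∈ E) ∧
    (∀ i : Fin r, (Finset.univ.filter (fun j => v i ∈ f j)).card = 2) ∧
    (∀ j : Fin r, (Finset.univ.filter (fun i => v i ∈ f j)).card = 2)

/-- The edges of a simple graph, viewed as a clutter of 2-element finsets. -/
def graphEdges (G : SimpleGraph V) : Set (Finset V) :=
  {t | ∃ a b : V, G.Adj a b ∧ t = {a, b}}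

/-- The whisker graph `G ∪ W(V)`: a copy of `G` on the `inl` vertices together with a
whisker edge `{inl a, inr a}` for every vertex `a`. -/
def whiskerGraph (G : SimpleGraph V) : SimpleGraph (V ⊕ V) where
  Adj u w :=
    (∃ a b : V, G.Adj a b ∧ u = Sum.inl a ∧ w = Sum.inl b) ∨
    (∃ a : V, (u = Sum.inl a ∧ w = Sum.inr a) ∨ (u = Sum.inr a ∧ w = Sum.inl a))
  symm := by
    constructor
    rintro u w (⟨a, b, hab, rfl, rfl⟩ | ⟨a, ⟨rfl, rfl⟩ | ⟨rfl, rfl⟩⟩)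
    · exact Or.inl ⟨b, a, hab.symm, rfl, rfl⟩
    · exact Or.inr ⟨a, Or.inr ⟨rfl, rfl⟩⟩
    · exact Or.inr ⟨a, Or.inl ⟨rfl, rfl⟩⟩
  loopless := by
    constructor
    rintro u (⟨a, b, hab, rfl, h⟩ | ⟨a, ⟨rfl, h⟩ | ⟨rfl, h⟩⟩)
    · rw [Sum.inl.injEq] at h; subst h; exact G.loopless.irrefl a hab
    · simp at h
    · simp at h

section WhiskerAux

variable {V : Type} [Fintype V] [DecidableEq V]

/-- The face of the whisker independence complex associated to `S ⊆ V`. -/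
def toFacet (S : Finset V) : Finset (V ⊕ V) :=
  S.image Sum.inl ∪ Sᶜ.image Sum.inr

@[simp] lemma mem_toFacet_inl {S : Finset V} {a : V} : Sum.inl a ∈ toFacet S ↔ a ∈ S := by
  simp [toFacet]

@[simp] lemma mem_toFacet_inr {S : Finset V} {a : V} : Sum.inr a ∈ toFacet S ↔ a ∉ S := by
  simp [toFacet]

lemma toFacet_injective : Function.Injective (toFacet (V := V)) := by
  intro S T h
  ext a
  rw [← mem_toFacet_inl (S := S), h, mem_toFacet_inl]

lemma card_toFacet (S : Finset V) : (toFacet S).card = Fintype.card V := by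
  rw [toFacet, Finset.card_union_of_disjoint (by simp [Finset.disjoint_left]),
    Finset.card_image_of_injective _ Sum.inl_injective,
    Finset.card_image_of_injective _ Sum.inr_injective, Finset.card_add_card_compl]

/-- Independent set of the graph `G`. -/
def GIndep (G : SimpleGraph V) (S : Finset V) : Prop :=
  ∀ a ∈ S, ∀ b ∈ S, ¬ G.Adj a b

lemma GIndep.subset {G : SimpleGraph V} {S T : Finset V} (h : GIndep G T) (hs : S ⊆ T) :
    GIndep G S := fun a ha b hb => h a (hs ha) b (hs hb)

lemma mem_graphEdges_whisker {G : SimpleGraph V} {e : Finset (V ⊕ V)} :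
    e ∈ graphEdges (whiskerGraph G) ↔
      (∃ a b, G.Adj a b ∧ e = {Sum.inl a, Sum.inl b}) ∨ ∃ a, e = {Sum.inl a, Sum.inr a} := by
  constructor
  · rintro ⟨u, w, (⟨a, b, hab, rfl, rfl⟩ | ⟨a, ⟨rfl, rfl⟩ | ⟨rfl, rfl⟩⟩), rfl⟩
    · exact Or.inl ⟨a, b, hab, rfl⟩
    · exact Or.inr ⟨a, rfl⟩
    · exact Or.inr ⟨a, Finset.pair_comm _ _⟩
  · rintro (⟨a, b, hab, rfl⟩ | ⟨a, rfl⟩)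
    · exact ⟨_, _, Or.inl ⟨a, b, hab, rfl, rfl⟩, rfl⟩
    · exact ⟨_, _, Or.inr ⟨a, Or.inl ⟨rfl, rfl⟩⟩, rfl⟩

lemma isIndep_toFacet {G : SimpleGraph V} {S : Finset V} (hS : GIndep G S) :
    IsIndependentSet (graphEdges (whiskerGraph G)) (toFacet S) := by
  intro e he hsub
  rw [mem_graphEdges_whisker] at he
  rcases he with ⟨a, b, hab, rfl⟩ | ⟨a, rfl⟩
  · rw [Finset.insert_subset_iff, Finset.singleton_subset_iff,
      mem_toFacet_inl, mem_toFacet_inl] at hsub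
    exact hS a hsub.1 b hsub.2 hab
  · rw [Finset.insert_subset_iff, Finset.singleton_subset_iff,
      mem_toFacet_inl, mem_toFacet_inr] at hsub
    exact hsub.2 hsub.1

lemma isFacet_toFacet {G : SimpleGraph V} {S : Finset V} (hS : GIndep G S) :
    IsFacet (graphEdges (whiskerGraph G)) (toFacet S) := by
  refine ⟨isIndep_toFacet hS, fun T hT hsub => ?_⟩
  refine Finset.Subset.antisymm hsub (fun x hx => ?_)
  cases x with
  | inl a =>
    by_contra hnot
    have haS : a ∉ S := fun h => hnot (mem_toFacet_inl.2 h)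
    have hinr : Sum.inr a ∈ T := hsub (mem_toFacet_inr.2 haS)
    refine hT {Sum.inl a, Sum.inr a} (mem_graphEdges_whisker.2 (Or.inr ⟨a, rfl⟩)) ?_
    intro y hy
    simp only [Finset.mem_insert, Finset.mem_singleton] at hy
    rcases hy with rfl | rfl
    exacts [hx, hinr]
  | inr a =>
    rw [mem_toFacet_inr]
    intro haS
    have hinl : Sum.inl a ∈ T := hsub (mem_toFacet_inl.2 haS)
    refine hT {Sum.inl a, Sum.inr a} (mem_graphEdges_whisker.2 (Or.inr ⟨a, rfl⟩)) ?_
    intro y hy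
    simp only [Finset.mem_insert, Finset.mem_singleton] at hy
    rcases hy with rfl | rfl
    exacts [hinl, hx]

lemma facet_eq_toFacet {G : SimpleGraph V} {F : Finset (V ⊕ V)}
    (hF : IsFacet (graphEdges (whiskerGraph G)) F) :
    ∃ S : Finset V, GIndep G S ∧ F = toFacet S := by
  classical
  set S : Finset V := Finset.univ.filter (fun a => Sum.inl a ∈ F) with hSdef
  have hmem : ∀ a : V, a ∈ S ↔ Sum.inl a ∈ F := by intro a; simp [hSdef]
  have hS : GIndep G S := by
    intro a ha b hb hab
    refine hF.1 {Sum.inl a, Sum.inl b} (mem_graphEdges_whisker.2 (Or.inl ⟨a, b, hab, rfl⟩)) ?_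
    intro y hy
    simp only [Finset.mem_insert, Finset.mem_singleton] at hy
    rcases hy with rfl | rfl
    exacts [(hmem a).1 ha, (hmem b).1 hb]
  refine ⟨S, hS, ?_⟩
  refine hF.2 _ (isIndep_toFacet hS) ?_
  intro x hx
  cases x with
  | inl a => exact mem_toFacet_inl.2 ((hmem a).2 hx)
  | inr a =>
    rw [mem_toFacet_inr, hmem]
    intro hinl
    refine hF.1 {Sum.inl a, Sum.inr a} (mem_graphEdges_whisker.2 (Or.inr ⟨a, rfl⟩)) ?_
    intro y hy
    simp only [Finset.mem_insert, Finset.mem_singleton] at hy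
    rcases hy with rfl | rfl
    exacts [hinl, hx]

open Classical in
/-- The list of all independent sets of `G`, sorted by increasing cardinality. -/
noncomputable def indList (G : SimpleGraph V) : List (Finset V) :=
  ((Finset.univ.powerset.filter (fun S => GIndep G S)).toList).mergeSort
    (fun a b => decide (a.card ≤ b.card))

lemma mem_indList {G : SimpleGraph V} {S : Finset V} : S ∈ indList G ↔ GIndep G S := by
  classical
  rw [indList, List.mem_mergeSort, Finset.mem_toList, Finset.mem_filter]
  simp

lemma nodup_indList (G : SimpleGraph V) : (indList G).Nodup :=
  ((List.mergeSort_perm _ _)).nodup_iff.2 (Finset.nodup_toList _)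

open Classical in
lemma sorted_indList (G : SimpleGraph V) :
    (indList G).Pairwise (fun a b : Finset V => a.card ≤ b.card) := by
  have h := List.pairwise_mergeSort
    (le := fun a b : Finset V => decide (a.card ≤ b.card))
    (fun a b c h₁ h₂ => decide_eq_true
      (le_trans (of_decide_eq_true h₁) (of_decide_eq_true h₂)))
    (fun a b => by simpa using le_total a.card b.card)
    ((Finset.univ.powerset.filter (fun S => GIndep G S)).toList)
  rw [indList]
  exact h.imp (fun hab => of_decide_eq_true hab)

end WhiskerAux

/-- The independence complex of a whisker graph is pure shellable. -/
theorem whisker_graph_pure_shellable (G : SimpleGraph V) :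
    PureShellable (cFacets (graphEdges (whiskerGraph G))) := by
  classical
  constructor
  · intro F hF F' hF'
    obtain ⟨S, _, rfl⟩ := facet_eq_toFacet hF
    obtain ⟨T, _, rfl⟩ := facet_eq_toFacet hF'
    rw [card_toFacet, card_toFacet]
  · refine ⟨(indList G).length, fun i => toFacet ((indList G).get i), ?_, ?_, ?_⟩
    · intro i j hij
      exact (List.Nodup.get_inj_iff (nodup_indList G)).1 (toFacet_injective hij)
    · intro F
      constructor
      · intro hF
        obtain ⟨S, hS, rfl⟩ := facet_eq_toFacet hF
        obtain ⟨i, hi⟩ := List.get_of_mem (mem_indList.2 hS)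
        exact ⟨i, congrArg toFacet hi⟩
      · rintro ⟨i, rfl⟩
        exact isFacet_toFacet (mem_indList.1 ((indList G).get_mem i))
    · intro i j hij
      have hcard : ((indList G).get i).card ≤ ((indList G).get j).card :=
        (sorted_indList G).rel_get_of_lt hij
      have hne : (indList G).get i ≠ (indList G).get j :=
        fun h => hij.ne ((List.Nodup.get_inj_iff (nodup_indList G)).1 h)
      have hex : ∃ a, a ∈ (indList G).get j ∧ a ∉ (indList G).get i := by
        by_contra hcon
        push_neg at hcon
        exact hne (Finset.eq_of_subset_of_card_le (fun a ha => hcon a ha) hcard).symm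
      obtain ⟨a, haj, hai⟩ := hex
      have hSj : GIndep G ((indList G).get j) := mem_indList.1 ((indList G).get_mem j)
      have hmem' : ((indList G).get j).erase a ∈ indList G :=
        mem_indList.2 (hSj.subset (Finset.erase_subset _ _))
      have hlt : (indList G).idxOf (((indList G).get j).erase a) < (indList G).length :=
        List.idxOf_lt_length_iff.2 hmem'
      set l : Fin (indList G).length :=
        ⟨(indList G).idxOf (((indList G).get j).erase a), hlt⟩ with hl
      have hgetl : (indList G).get l = ((indList G).get j).erase a := List.idxOf_get hlt
      have hlj : l < j := by
        have hcardl : ((indList G).get l).card < ((indList G).get j).card := by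
          rw [hgetl]; exact Finset.card_erase_lt_of_mem haj
        by_contra hnot
        push_neg at hnot
        rcases eq_or_lt_of_le hnot with heq | hlt2
        · rw [heq] at hcardl; exact lt_irrefl _ hcardl
        · have h2 := (sorted_indList G).rel_get_of_lt hlt2
          omega
      refine ⟨Sum.inl a, ?_, l, hlj, ?_⟩
      · simp only [Finset.mem_sdiff, mem_toFacet_inl]
        exact ⟨haj, hai⟩
      · show toFacet ((indList G).get j) \ toFacet ((indList G).get l) = {Sum.inl a}
        rw [hgetl]
        ext x
        cases x with
        | inl b =>
          simp only [Finset.mem_sdiff, mem_toFacet_inl, Finset.mem_erase,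
            Finset.mem_singleton, Sum.inl.injEq, not_and]
          constructor
          · rintro ⟨hb, hnb⟩
            by_contra hba
            exact (hnb hba) hb
          · rintro rfl
            exact ⟨haj, fun h => absurd rfl h⟩
        | inr b =>
          simp only [Finset.mem_sdiff, mem_toFacet_inr, not_not, Finset.mem_erase,
            Finset.mem_singleton]
          constructor
          · rintro ⟨hb, hnb⟩
            exact absurd hnb.2 hb
          · intro h
            exact (Sum.inr_ne_inl h).elim
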